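/- arXiv:2110.01581 — 2 statements merged into one kernel-verified Lean document; each statement's English description precedes it below -/
import Mathlib

section
/- In the change-point model, suppose that the log-likelihood ratios have finite variances and that sup_{t ≥ ν ≥ 1} (1/g_ν(n)²) · Σ_{i=t}^{t+n−1} Var_ν(Z_{i,t}) → 0 as n → ∞. Then the right-tail condition holds: for every δ > 0, sup_{ν ≥ 1} P_ν( max_{t ≤ n} Σ_{i=ν}^{ν+t−1} Z_{i,ν} ≥ (1+δ) g_ν(n) ) → 0 as n → ∞. -/
open MeasureTheory ProbabilityTheory Filter Set
open scoped ENNReal NNReal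

namespace QCD

/-- The sample space: sequences of real observations `X 1, X 2, ...`. -/
abbrev Obs : Type := ℕ → ℝ

/-- Coordinate process: `X i ω = ω i`. -/
def X (i : ℕ) : Obs → ℝ := fun ω => ω i

/-- Natural filtration `F n = σ(X 1, ..., X n)`. -/
def F (n : ℕ) : MeasurableSpace Obs :=
  ⨆ i ∈ Set.Icc 1 n, MeasurableSpace.comap (X i) inferInstance

/-- A change-point model: pre-change density `p0` (everywhere positive), post-change
densities `p1 n k` (`n ≥ k ≥ 1`), measures `P ν` (change at `ν`) and `Pinf` (no change),
under which the coordinates are independent with the prescribed densities. -/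
structure Model where
  p0 : ℝ → ℝ
  p1 : ℕ → ℕ → ℝ → ℝ
  P : ℕ → Measure Obs
  Pinf : Measure Obs
  p0_pos : ∀ x, 0 < p0 x
  p0_meas : Measurable p0
  p1_meas : ∀ n k, Measurable (p1 n k)
  p1_nonneg : ∀ n k x, 0 ≤ p1 n k x
  p0_prob : ∫ x, p0 x = 1
  p1_prob : ∀ n k, 1 ≤ k → k ≤ n → ∫ x, p1 n k x = 1
  P_prob : ∀ ν, IsProbabilityMeasure (P ν)
  Pinf_prob : IsProbabilityMeasure Pinf
  P_indep : ∀ ν, iIndepFun X (P ν)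
  Pinf_indep : iIndepFun X Pinf
  P_law_pre : ∀ ν i, 1 ≤ i → i < ν →
    (P ν).map (X i) = (volume : Measure ℝ).withDensity fun x => ENNReal.ofReal (p0 x)
  P_law_post : ∀ ν i, 1 ≤ ν → ν ≤ i →
    (P ν).map (X i) = (volume : Measure ℝ).withDensity fun x => ENNReal.ofReal (p1 i ν x)
  Pinf_law : ∀ i, 1 ≤ i → Pinf.map (X i) = (volume : Measure ℝ).withDensity fun x => ENNReal.ofReal (p0 x)

/-- Log-likelihood ratio `Z_{n,k} = log (p1 n k (X n) / p0 (X n))`. -/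
noncomputable def Model.Z (M : Model) (n k : ℕ) : Obs → ℝ :=
  fun ω => Real.log (M.p1 n k (ω n) / M.p0 (ω n))

/-- Partial sum `Σ_{i=t}^{t+n-1} Z_{i,t}`. -/
noncomputable def Model.S (M : Model) (t n : ℕ) : Obs → ℝ :=
  fun ω => ∑ i ∈ Finset.range n, M.Z (t + i) t ω

/-- Expectation under `P ν`. -/
noncomputable def Model.E (M : Model) (ν : ℕ) (f : Obs → ℝ) : ℝ := ∫ ω, f ω ∂(M.P ν)

/-- `g` is the family of growth functions of the model: each `g ν` is positive, increasing and
continuous on `(0,∞)`, interpolates the cumulative KL divergence, and the one-step divergences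
are positive. -/
def Model.IsGrowth (M : Model) (g : ℕ → ℝ → ℝ) : Prop :=
  ∀ ν : ℕ, 1 ≤ ν →
    StrictMonoOn (g ν) (Set.Ioi 0) ∧ ContinuousOn (g ν) (Set.Ioi 0) ∧
    (∀ x : ℝ, 0 < x → 0 < g ν x) ∧
    (∀ n : ℕ, 1 ≤ n → g ν (n : ℝ) = ∑ i ∈ Finset.range n, M.E ν (M.Z (ν + i) ν)) ∧
    (∀ i : ℕ, ν ≤ i → 0 < M.E ν (M.Z i ν))

/-- Right-tail condition: `sup_{ν ≥ 1} P_ν(max_{t ≤ n} Σ_{i=ν}^{ν+t-1} Z_{i,ν} ≥ (1+δ) g_ν(n)) → 0`. -/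
def Model.RightTail (M : Model) (g : ℕ → ℝ → ℝ) : Prop :=
  ∀ δ : ℝ, 0 < δ →
    Tendsto (fun n : ℕ => ⨆ ν : ℕ, ⨆ _ : 1 ≤ ν,
        M.P ν {ω | ∃ t : ℕ, 1 ≤ t ∧ t ≤ n ∧ (1 + δ) * g ν (n : ℝ) ≤ M.S ν t ω})
      atTop (nhds 0)

/-- Left-tail condition: `sup_{t ≥ ν ≥ 1} P_ν(Σ_{i=t}^{t+n-1} Z_{i,t} ≤ (1-δ) g_ν(n)) → 0`. -/
def Model.LeftTail (M : Model) (g : ℕ → ℝ → ℝ) : Prop :=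
  ∀ δ : ℝ, δ ∈ Set.Ioo (0 : ℝ) 1 →
    Tendsto (fun n : ℕ => ⨆ ν : ℕ, ⨆ _ : 1 ≤ ν, ⨆ t : ℕ, ⨆ _ : ν ≤ t,
        M.P ν {ω | M.S t n ω ≤ (1 - δ) * g ν (n : ℝ)})
      atTop (nhds 0)

/-- `ginv = g⁻¹ = sup_{ν ≥ 1} g_ν⁻¹`, expressed via pointwise inverses `gi ν` of `g ν`. -/
def IsGInv (g : ℕ → ℝ → ℝ) (gi : ℕ → ℝ → ℝ) (ginv : ℝ → ℝ) : Prop :=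
  (∀ ν : ℕ, 1 ≤ ν → ∀ x : ℝ, 0 < x → 0 < gi ν x ∧ g ν (gi ν x) = x) ∧
  (∀ x : ℝ, 0 < x → IsLUB {y : ℝ | ∃ ν : ℕ, 1 ≤ ν ∧ y = gi ν x} (ginv x))

/-- A stopping time of the natural filtration, with values in `ℕ∞`. -/
def IsStopping (τ : Obs → ℕ∞) : Prop :=
  ∀ n : ℕ, MeasurableSet[F n] {ω | τ ω ≤ (n : ℕ∞)}

/-- False alarm rate `FAR(τ) = 1 / E_∞[τ]`. -/
noncomputable def Model.FAR (M : Model) (τ : Obs → ℕ∞) : ℝ≥0∞ :=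
  (∫⁻ ω, ENat.toENNReal (τ ω) ∂M.Pinf)⁻¹

/-- Pollak's measure `SADD(τ) = sup_{ν ≥ 1} E_ν[τ - ν + 1 | τ ≥ ν]`. -/
noncomputable def Model.SADD (M : Model) (τ : Obs → ℕ∞) : ℝ≥0∞ :=
  ⨆ ν : ℕ, ⨆ _ : 1 ≤ ν,
    ∫⁻ ω, ENat.toENNReal (τ ω + 1 - (ν : ℕ∞)) ∂(M.P ν)[|{ω | (ν : ℕ∞) ≤ τ ω}]

/-- The regular conditional distribution given `F (ν-1)` under `P ν`. -/
noncomputable def Model.condKer (M : Model) (ν : ℕ) : @Kernel Obs Obs (F (ν - 1)) _ :=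
  letI := M.P_prob ν
  condExpKernel (M.P ν) (F (ν - 1))

/-- Lorden's measure `WADD(τ) = sup_{ν ≥ 1} esssup E_ν[(τ - ν + 1)⁺ | F (ν-1)]`, with the
conditional expectation realized through the regular conditional distribution. -/
noncomputable def Model.WADD (M : Model) (τ : Obs → ℕ∞) : ℝ≥0∞ :=
  ⨆ ν : ℕ, ⨆ _ : 1 ≤ ν,
    essSup (fun ω =>
      ∫⁻ y, ENat.toENNReal (τ y + 1 - (ν : ℕ∞)) ∂(M.condKer ν ω)) (M.P ν)

/-- Window-limited CuSum stopping time with window size `m` and threshold `b`. -/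
noncomputable def Model.tauC (M : Model) (m : ℕ) (b : ℝ) : Obs → ℕ∞ :=
  fun ω => sInf {N : ℕ∞ | ∃ n : ℕ, N = (n : ℕ∞) ∧ 1 ≤ n ∧
    ∃ k : ℕ, max 1 (n - m) ≤ k ∧ k ≤ n ∧ b ≤ ∑ i ∈ Finset.Icc k n, M.Z i k ω}



lemma measurable_Z (M : Model) (i k : ℕ) : Measurable (M.Z i k) :=
  (Real.measurable_log.comp ((M.p1_meas i k).div M.p0_meas)).comp (measurable_pi_apply i)

lemma measurable_Z_comap (M : Model) (i k : ℕ) :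
    Measurable[MeasurableSpace.comap (X i) inferInstance] (M.Z i k) :=
  (Real.measurable_log.comp ((M.p1_meas i k).div M.p0_meas)).comp
    (comap_measurable (X i))

/-- Key per-`ν` Chebyshev/Doob bound. -/
lemma key_bound (M : Model) (g : ℕ → ℝ → ℝ) (hg : M.IsGrowth g)
    (hL2 : ∀ ν t i : ℕ, 1 ≤ ν → ν ≤ t → t ≤ i → MemLp (M.Z i t) 2 (M.P ν))
    {δ e : ℝ} (hδ : 0 < δ) {n ν : ℕ} (hν : 1 ≤ ν) (hn : 1 ≤ n)
    (hvarb : ∑ i ∈ Finset.range n, variance (M.Z (ν + i) ν) (M.P ν) ≤ e * g ν (n : ℝ) ^ 2) :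
    M.P ν {ω | ∃ t : ℕ, 1 ≤ t ∧ t ≤ n ∧ (1 + δ) * g ν (n : ℝ) ≤ M.S ν t ω}
      ≤ ENNReal.ofReal (e / δ ^ 2) := by
  haveI := M.P_prob ν
  set μ := M.P ν with hμ
  obtain ⟨hmono, -, hpos, hsum, -⟩ := hg ν hν
  have hgn : 0 < g ν (n : ℝ) := hpos _ (by exact_mod_cast hn)
  set m : ℕ → ℝ := fun i => M.E ν (M.Z (ν + i) ν) with hm
  set W : ℕ → Obs → ℝ := fun i ω => M.Z (ν + i) ν ω - m i with hWdef
  have hZL2 : ∀ i : ℕ, MemLp (M.Z (ν + i) ν) 2 μ := fun i =>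
    hL2 ν ν (ν + i) hν le_rfl (Nat.le_add_right ν i)
  have hWL2 : ∀ i, MemLp (W i) 2 μ := fun i => (hZL2 i).sub (memLp_const (m i))
  have hWint : ∀ i, Integrable (W i) μ := fun i => (hWL2 i).integrable one_le_two
  have hWmeas : ∀ i, Measurable (W i) := fun i => (measurable_Z M _ _).sub measurable_const
  have hWint0 : ∀ i, ∫ ω, W i ω ∂μ = 0 := by
    intro i
    have h := integral_sub ((hZL2 i).integrable one_le_two) (integrable_const (m i))
    simp only [hWdef] at h ⊢
    rw [h, integral_const]
    simp [Model.E, hm, hμ]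
  -- the filtration
  set 𝒢 : MeasureTheory.Filtration ℕ (inferInstance : MeasurableSpace Obs) :=
    { seq := fun k => ⨆ i ∈ Set.Iic k, MeasurableSpace.comap (X (ν + i)) inferInstance
      mono' := fun j k hjk => biSup_mono fun i (hi : i ≤ j) => hi.trans hjk
      le' := fun k => iSup₂_le fun i _ => (measurable_pi_apply (ν + i)).comap_le } with h𝒢
  have hW𝒢 : ∀ i k : ℕ, i ≤ k → Measurable[𝒢 k] (W i) := by
    intro i k hik
    have h1 : Measurable[MeasurableSpace.comap (X (ν + i)) inferInstance] (W i) :=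
      (measurable_Z_comap M (ν + i) ν).sub measurable_const
    exact h1.mono (le_biSup (fun j => MeasurableSpace.comap (X (ν + j)) inferInstance) (Set.mem_Iic.2 hik)) le_rfl
  -- the martingale-type process and its square
  set T : ℕ → Obs → ℝ := fun k ω => ∑ i ∈ Finset.range (k + 1), W i ω with hTdef
  have hT𝒢 : ∀ k, Measurable[𝒢 k] (T k) := fun k =>
    Finset.measurable_sum _ fun i hi => hW𝒢 i k (Nat.lt_succ_iff.mp (Finset.mem_range.mp hi))
  have hTL2 : ∀ k, MemLp (T k) 2 μ := fun k => memLp_finset_sum _ fun i _ => hWL2 i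
  set Q : ℕ → Obs → ℝ := fun k ω => T k ω ^ 2 with hQdef
  have hQint : ∀ k, Integrable (Q k) μ := fun k => (hTL2 k).integrable_sq
  have hQadp : StronglyAdapted 𝒢 Q := fun k => ((hT𝒢 k).pow_const 2).stronglyMeasurable
  -- submartingale property
  have hstep : ∀ i : ℕ, ∀ s : Set Obs, MeasurableSet[𝒢 i] s →
      ∫ ω in s, Q i ω ∂μ ≤ ∫ ω in s, Q (i + 1) ω ∂μ := by
    intro i s hs
    have hsm : MeasurableSet s := 𝒢.le i s hs
    have hIndep : Indep (𝒢 i)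
        (MeasurableSpace.comap (X (ν + (i + 1))) inferInstance) μ := by
      have h := indep_iSup_of_disjoint (μ := μ)
        (fun k => (measurable_pi_apply k).comap_le) (M.P_indep ν)
        (show Disjoint ((fun j => ν + j) '' Set.Iic i) {ν + (i + 1)} by
          simp only [Set.disjoint_singleton_right, Set.mem_image, Set.mem_Iic, not_exists]
          rintro j ⟨hj, hj'⟩; omega)
      rw [iSup_image, iSup_singleton] at h
      exact h
    have h2 : Measurable[MeasurableSpace.comap (X (ν + (i + 1))) inferInstance] (W (i + 1)) :=
      (measurable_Z_comap M _ _).sub measurable_const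
    have hIndTW : IndepFun (T i) (W (i + 1)) μ :=
      indep_of_indep_of_le_right (indep_of_indep_of_le_left hIndep (hT𝒢 i).comap_le) h2.comap_le
    have hIndFun : IndepFun (s.indicator (T i)) (W (i + 1)) μ :=
      indep_of_indep_of_le_right
        (indep_of_indep_of_le_left hIndep ((hT𝒢 i).indicator hs).comap_le) h2.comap_le
    have hTWint : Integrable (fun ω => T i ω * W (i + 1) ω) μ :=
      hIndTW.integrable_mul ((hTL2 i).integrable one_le_two) (hWint _)
    have hcross : ∫ ω in s, T i ω * W (i + 1) ω ∂μ = 0 := by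
      have heq : ∫ ω in s, T i ω * W (i + 1) ω ∂μ
          = ∫ ω, s.indicator (T i) ω * W (i + 1) ω ∂μ := by
        rw [← integral_indicator hsm]
        congr 1; funext ω
        by_cases hω : ω ∈ s <;> simp [hω]
      have hprod := hIndFun.integral_mul_eq_mul_integral
        (((hTL2 i).integrable one_le_two).indicator hsm).aestronglyMeasurable (hWint _).aestronglyMeasurable
      calc ∫ ω in s, T i ω * W (i + 1) ω ∂μ
          = ∫ ω, s.indicator (T i) ω * W (i + 1) ω ∂μ := heq
        _ = (∫ ω, s.indicator (T i) ω ∂μ) * ∫ ω, W (i + 1) ω ∂μ := hprod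
        _ = 0 := by rw [hWint0]; ring
    have hQsucc : ∀ ω, Q (i + 1) ω
        = Q i ω + (2 * (T i ω * W (i + 1) ω) + W (i + 1) ω ^ 2) := by
      intro ω
      have : T (i + 1) ω = T i ω + W (i + 1) ω := by
        simp only [hTdef, Finset.sum_range_succ]
      simp only [hQdef, this]; ring
    have hW2int : Integrable (fun ω => W (i + 1) ω ^ 2) μ := (hWL2 (i + 1)).integrable_sq
    have hTW2 : Integrable (fun ω => 2 * (T i ω * W (i + 1) ω)) μ := hTWint.const_mul 2
    have hsplit : ∫ ω in s, Q (i + 1) ω ∂μ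
        = ∫ ω in s, Q i ω ∂μ
          + (2 * ∫ ω in s, T i ω * W (i + 1) ω ∂μ + ∫ ω in s, W (i + 1) ω ^ 2 ∂μ) := by
      have h0 : ∫ ω in s, Q (i + 1) ω ∂μ
          = ∫ ω in s, (Q i ω + (2 * (T i ω * W (i + 1) ω) + W (i + 1) ω ^ 2)) ∂μ :=
        integral_congr_ae (Filter.Eventually.of_forall fun ω => hQsucc ω)
      have hsum2 : Integrable (fun ω => 2 * (T i ω * W (i + 1) ω) + W (i + 1) ω ^ 2) μ :=
        hTW2.add hW2int
      rw [h0, integral_add (hQint i).integrableOn hsum2.integrableOn,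
        integral_add hTW2.integrableOn hW2int.integrableOn, integral_const_mul]
    have hW2nonneg : 0 ≤ ∫ ω in s, W (i + 1) ω ^ 2 ∂μ :=
      setIntegral_nonneg hsm fun ω _ => sq_nonneg _
    rw [hsplit, hcross]
    linarith
  have hQsub : Submartingale Q 𝒢 μ :=
    submartingale_of_setIntegral_le_succ hQadp hQint hstep
  have hQnonneg : (0 : ℕ → Obs → ℝ) ≤ Q := fun i ω => sq_nonneg (T i ω)
  -- Doob maximal inequality
  set ε₀ : ℝ≥0 := Real.toNNReal ((δ * g ν (n : ℝ)) ^ 2) with hε₀def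
  have hmax := maximal_ineq (μ := μ) hQsub hQnonneg (ε := ε₀) (n - 1)
  set Sup : Set Obs := {ω | (ε₀ : ℝ) ≤
    (Finset.range (n - 1 + 1)).sup' Finset.nonempty_range_add_one fun k => Q k ω} with hSupdef
  -- event inclusion
  have hginc : ∀ t : ℕ, 1 ≤ t → t ≤ n → g ν (t : ℝ) ≤ g ν (n : ℝ) := fun t ht htn =>
    hmono.monotoneOn (Set.mem_Ioi.2 (by exact_mod_cast ht))
      (Set.mem_Ioi.2 (by exact_mod_cast hn)) (by exact_mod_cast htn)
  have hincl : {ω | ∃ t : ℕ, 1 ≤ t ∧ t ≤ n ∧ (1 + δ) * g ν (n : ℝ) ≤ M.S ν t ω} ⊆ Sup := by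
    rintro ω ⟨t, ht1, htn, hSt⟩
    have hrange : t - 1 ∈ Finset.range (n - 1 + 1) := by
      rw [Finset.mem_range]; omega
    have hTt : T (t - 1) ω = M.S ν t ω - g ν (t : ℝ) := by
      have h1 : t - 1 + 1 = t := by omega
      simp only [hTdef, h1, hWdef]
      rw [Finset.sum_sub_distrib, hsum t ht1]
      rfl
    have hT0 : δ * g ν (n : ℝ) ≤ T (t - 1) ω := by
      have := hginc t ht1 htn
      rw [hTt]; nlinarith
    have hQge : (ε₀ : ℝ) ≤ Q (t - 1) ω := by
      rw [hε₀def, Real.coe_toNNReal _ (sq_nonneg _)]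
      calc (δ * g ν (n : ℝ)) ^ 2 ≤ T (t - 1) ω ^ 2 :=
            pow_le_pow_left₀ (by positivity) hT0 2
        _ = Q (t - 1) ω := rfl
    exact le_trans hQge (Finset.le_sup' (fun k => Q k ω) hrange)
  -- bound the integral by the variance sum
  set SZ : Obs → ℝ := ∑ i ∈ Finset.range n, M.Z (ν + i) ν with hSZdef
  have hSZL2 : MemLp SZ 2 μ := memLp_finset_sum' _ fun i _ => hZL2 i
  have hμSZ : μ[SZ] = ∑ i ∈ Finset.range n, m i := by
    have : μ[SZ] = ∑ i ∈ Finset.range n, ∫ ω, M.Z (ν + i) ν ω ∂μ := by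
      rw [hSZdef]
      rw [show (∫ ω, (∑ i ∈ Finset.range n, M.Z (ν + i) ν) ω ∂μ)
          = ∫ ω, ∑ i ∈ Finset.range n, M.Z (ν + i) ν ω ∂μ by
        congr 1; funext ω; simp [Finset.sum_apply]]
      exact integral_finset_sum _ fun i _ => (hZL2 i).integrable one_le_two
    rw [this]
    rfl
  have hEQ : ∫ ω, Q (n - 1) ω ∂μ = variance SZ μ := by
    rw [variance_eq_integral hSZL2.aestronglyMeasurable.aemeasurable]
    congr 1
    funext ω
    have h1 : n - 1 + 1 = n := by omega
    simp only [hQdef, hTdef, h1, hWdef, Pi.pow_apply, Pi.sub_apply,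
      hμSZ, Finset.sum_sub_distrib]
    congr 2
    simp [hSZdef, Finset.sum_apply]
  have hvareq : variance SZ μ = ∑ i ∈ Finset.range n, variance (M.Z (ν + i) ν) μ := by
    refine IndepFun.variance_sum (fun i _ => hZL2 i) ?_
    intro i _ j _ hij
    have h := (M.P_indep ν).indepFun (show ν + i ≠ ν + j by omega)
    exact h.comp (Real.measurable_log.comp ((M.p1_meas (ν + i) ν).div M.p0_meas))
      (Real.measurable_log.comp ((M.p1_meas (ν + j) ν).div M.p0_meas))
  have hQle : ∫ ω, Q (n - 1) ω ∂μ ≤ e * g ν (n : ℝ) ^ 2 := by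
    rw [hEQ, hvareq]; exact hvarb
  -- combine
  have hε₀pos : (0 : ℝ) < (δ * g ν (n : ℝ)) ^ 2 := by positivity
  have hε₀ne : (ε₀ : ℝ≥0∞) ≠ 0 := by
    simp only [hε₀def, ne_eq, ENNReal.coe_eq_zero, Real.toNNReal_eq_zero, not_le]
    exact hε₀pos
  have hbound : (ε₀ : ℝ≥0∞) * μ Sup ≤ ENNReal.ofReal (e * g ν (n : ℝ) ^ 2) := by
    have hset : ∫ ω in Sup, Q (n - 1) ω ∂μ ≤ e * g ν (n : ℝ) ^ 2 :=
      le_trans (setIntegral_le_integral (s := Sup) (hQint (n - 1))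
        (Filter.Eventually.of_forall fun ω => sq_nonneg _)) hQle
    exact le_trans hmax (ENNReal.ofReal_le_ofReal hset)
  have hfinal : μ Sup ≤ ENNReal.ofReal (e / δ ^ 2) := by
    have h1 : μ Sup ≤ ENNReal.ofReal (e * g ν (n : ℝ) ^ 2) / (ε₀ : ℝ≥0∞) := by
      rw [ENNReal.le_div_iff_mul_le (Or.inl hε₀ne) (Or.inl ENNReal.coe_ne_top), mul_comm]
      exact hbound
    have h2 : (ε₀ : ℝ≥0∞) = ENNReal.ofReal ((δ * g ν (n : ℝ)) ^ 2) := rfl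
    rw [h2, ← ENNReal.ofReal_div_of_pos hε₀pos] at h1
    refine h1.trans (le_of_eq ?_)
    congr 1
    rw [mul_pow]
    rw [mul_comm (δ ^ 2) (g ν (n : ℝ) ^ 2), mul_comm e (g ν (n : ℝ) ^ 2),
      mul_div_mul_left _ _ (by positivity : g ν (n : ℝ) ^ 2 ≠ 0)]
  exact le_trans (measure_mono hincl) hfinal


/-- **Lemma 1, first part.** If the log-likelihood ratios have finite second
moments and `sup_{t ≥ ν ≥ 1} g_ν(n)⁻² Σ_{i=t}^{t+n-1} Var_ν(Z_{i,t}) → 0`, then the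
right-tail condition holds. -/
theorem rightTail_of_variance_condition
    (M : Model) (g : ℕ → ℝ → ℝ) (hg : M.IsGrowth g)
    (hL2 : ∀ ν t i : ℕ, 1 ≤ ν → ν ≤ t → t ≤ i → MemLp (M.Z i t) 2 (M.P ν))
    (hvar : ∀ ε : ℝ, 0 < ε → ∃ N : ℕ, ∀ n : ℕ, N ≤ n → ∀ ν t : ℕ, 1 ≤ ν → ν ≤ t →
      ∑ i ∈ Finset.range n, variance (M.Z (t + i) t) (M.P ν) ≤ ε * g ν (n : ℝ) ^ 2) :
    M.RightTail g := by
  intro δ hδ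
  rw [ENNReal.tendsto_atTop_zero]
  intro ε hε
  set c : ℝ := (min 1 ε).toReal / 2 with hc
  have hmin_ne_top : min 1 ε ≠ ⊤ := ne_top_of_le_ne_top ENNReal.one_ne_top (min_le_left _ _)
  have hmin_pos : 0 < min 1 ε := lt_min one_pos hε
  have htr_pos : 0 < (min 1 ε).toReal := ENNReal.toReal_pos hmin_pos.ne' hmin_ne_top
  have hc_pos : 0 < c := by rw [hc]; positivity
  have hofc : ENNReal.ofReal c ≤ ε := by
    calc ENNReal.ofReal c ≤ ENNReal.ofReal (min 1 ε).toReal :=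
          ENNReal.ofReal_le_ofReal (by rw [hc]; linarith)
      _ = min 1 ε := ENNReal.ofReal_toReal hmin_ne_top
      _ ≤ ε := min_le_right _ _
  set e : ℝ := δ ^ 2 * c with he
  have he_pos : 0 < e := by rw [he]; positivity
  obtain ⟨N, hN⟩ := hvar e he_pos
  refine ⟨max N 1, fun n hn => ?_⟩
  have hn1 : 1 ≤ n := le_trans (le_max_right N 1) hn
  have hnN : N ≤ n := le_trans (le_max_left N 1) hn
  have hkey : ∀ ν : ℕ, 1 ≤ ν →
      M.P ν {ω | ∃ t : ℕ, 1 ≤ t ∧ t ≤ n ∧ (1 + δ) * g ν (n : ℝ) ≤ M.S ν t ω}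
        ≤ ENNReal.ofReal (e / δ ^ 2) := fun ν hν =>
    key_bound M g hg hL2 hδ hν hn1 (hN n hnN ν ν hν le_rfl)
  have hediv : e / δ ^ 2 = c := by rw [he]; field_simp
  refine le_trans (iSup_le fun ν => iSup_le fun hν => hkey ν hν) ?_
  rw [hediv]
  exact hofc

end QCD
end

section
/- In the change-point model, for every stopping time τ of (F_n), every integer ν ≥ 1, every integer h ≥ 1 and every real C > 0: P_ν( ν ≤ τ < ν + h ) ≤ e^C · P_∞( ν ≤ τ < ν + h ) + P_ν( max_{0 ≤ n < h} Σ_{i=ν}^{ν+n} Z_{i,ν} ≥ C ). -/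
open MeasureTheory ProbabilityTheory Filter Set
open scoped ENNReal NNReal

namespace QCD

lemma measurable_X (i : ℕ) : Measurable (X i) := measurable_pi_apply i

lemma F_le (n : ℕ) : F n ≤ (inferInstance : MeasurableSpace Obs) := by
  apply iSup_le; intro i; apply iSup_le; intro _
  exact (measurable_X i).comap_le

lemma X_mem_F {i n : ℕ} (h1 : 1 ≤ i) (h2 : i ≤ n) :
    MeasurableSpace.comap (X i) inferInstance ≤ F n :=
  le_biSup (fun i => MeasurableSpace.comap (X i) inferInstance) (Set.mem_Icc.mpr ⟨h1, h2⟩)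

lemma measurable_F_X {i n : ℕ} (h1 : 1 ≤ i) (h2 : i ≤ n) :
    Measurable[F n] (X i) :=
  measurable_iff_comap_le.mpr (X_mem_F h1 h2)

lemma F_mono {m n : ℕ} (h : m ≤ n) : F m ≤ F n := by
  apply iSup_le; intro i; apply iSup_le; intro hi
  exact X_mem_F hi.1 (hi.2.trans h)

def cyl (n : ℕ) : Set (Set Obs) :=
  {D | ∃ B : ℕ → Set ℝ, (∀ i, MeasurableSet (B i)) ∧ D = ⋂ i ∈ Finset.Icc 1 n, X i ⁻¹' B i}

lemma isPiSystem_cyl (n : ℕ) : IsPiSystem (cyl n) := by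
  rintro _ ⟨B, hB, rfl⟩ _ ⟨B', hB', rfl⟩ -
  refine ⟨fun i => B i ∩ B' i, fun i => (hB i).inter (hB' i), ?_⟩
  ext ω
  simp only [Set.mem_inter_iff, Set.mem_iInter, Set.mem_preimage]
  exact ⟨fun ⟨h1, h2⟩ i hi => ⟨h1 i hi, h2 i hi⟩,
    fun h => ⟨fun i hi => (h i hi).1, fun i hi => (h i hi).2⟩⟩

lemma univ_mem_cyl (n : ℕ) : Set.univ ∈ cyl n :=
  ⟨fun _ => Set.univ, fun _ => MeasurableSet.univ, by simp⟩

lemma F_eq_generateFrom (n : ℕ) : F n = MeasurableSpace.generateFrom (cyl n) := by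
  apply le_antisymm
  · apply iSup_le; intro i; apply iSup_le; intro hi
    rw [← measurable_iff_comap_le]
    intro B hB
    apply MeasurableSpace.measurableSet_generateFrom
    refine ⟨fun j => if j = i then B else Set.univ, ?_, ?_⟩
    · intro j; dsimp only; split_ifs <;> simp [hB]
    · ext ω
      simp only [Set.mem_preimage, Set.mem_iInter]
      constructor
      · intro h j hj
        split_ifs with hji
        · subst hji; exact h
        · trivial
      · intro h
        have := h i (by simpa [Finset.mem_Icc] using hi)
        simpa using this
  · apply MeasurableSpace.generateFrom_le
    rintro _ ⟨B, hB, rfl⟩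
    refine Finset.measurableSet_biInter _ (fun i hi => ?_)
    rw [Finset.mem_Icc] at hi
    exact X_mem_F hi.1 hi.2 _ ⟨B i, hB i, rfl⟩

lemma lintegral_prod_coord (μ : Measure Obs) [IsProbabilityMeasure μ]
    (hind : iIndepFun X μ)
    (g : ℕ → ℝ → ℝ≥0∞) (hg : ∀ i, Measurable (g i)) (s : Finset ℕ) :
    ∫⁻ ω, ∏ i ∈ s, g i (ω i) ∂μ = ∏ i ∈ s, ∫⁻ ω, g i (ω i) ∂μ := by
  classical
  induction s using Finset.induction_on with
  | empty => simp
  | @insert a s ha ih =>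
    have hmeas : ∀ i : ℕ, Measurable fun ω : Obs => g i (ω i) :=
      fun i => (hg i).comp (measurable_pi_apply i)
    have hcomp : iIndepFun
        (fun i => g i ∘ X i) μ := hind.comp g hg
    have h2' := hcomp.indepFun_finsetProd_of_notMem
      (fun i => hmeas i) ha
    have h2 : IndepFun (fun ω : Obs => ∏ i ∈ s, g i (ω i)) (fun ω : Obs => g a (ω a)) μ := by
      have : (∏ j ∈ s, g j ∘ X j) = fun ω : Obs => ∏ i ∈ s, g i (ω i) := by
        funext ω; simp [Finset.prod_apply, X]
      rwa [this] at h2'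
    have hprodmeas : Measurable fun ω : Obs => ∏ i ∈ s, g i (ω i) :=
      Finset.measurable_prod s (fun i _ => hmeas i)
    have key := lintegral_mul_eq_lintegral_mul_lintegral_of_indepFun
      hprodmeas (hmeas a) h2
    simp only [Finset.prod_insert ha]
    calc ∫⁻ ω, g a (ω a) * ∏ i ∈ s, g i (ω i) ∂μ
        = ∫⁻ ω, ((fun ω : Obs => ∏ i ∈ s, g i (ω i)) * (fun ω : Obs => g a (ω a))) ω ∂μ := by
          apply lintegral_congr; intro ω; simp [mul_comm]
      _ = (∫⁻ ω, ∏ i ∈ s, g i (ω i) ∂μ) * ∫⁻ ω, g a (ω a) ∂μ := key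
      _ = (∫⁻ ω, g a (ω a) ∂μ) * ∏ i ∈ s, ∫⁻ ω, g i (ω i) ∂μ := by rw [ih, mul_comm]

/-- Likelihood ratio density of `P ν` w.r.t. `Pinf` on `F n`. -/
noncomputable def Model.den (M : Model) (ν n : ℕ) : Obs → ℝ≥0∞ :=
  fun ω => ∏ i ∈ Finset.Icc ν n, ENNReal.ofReal (M.p1 i ν (ω i) / M.p0 (ω i))

lemma Model.den_meas (M : Model) (ν n : ℕ) : Measurable (M.den ν n) := by
  apply Finset.measurable_prod
  intro i _
  exact (ENNReal.measurable_ofReal.comp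
    ((M.p1_meas i ν).div M.p0_meas)).comp (measurable_pi_apply i)

/-- Key change-of-measure identity on `F n`. -/
lemma Model.key (M : Model) {ν n : ℕ} (hν : 1 ≤ ν) (hn : ν ≤ n) {D : Set Obs}
    (hD : MeasurableSet[F n] D) :
    M.P ν D = ∫⁻ ω in D, M.den ν n ω ∂M.Pinf := by
  classical
  haveI := M.P_prob ν
  haveI := M.Pinf_prob
  set Q : Measure Obs := M.Pinf.withDensity (M.den ν n) with hQ
  -- the generator computation
  have hgen : ∀ D ∈ cyl n, M.P ν D = Q D := by
    rintro _ ⟨B, hB, rfl⟩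
    -- the per-coordinate factor functions
    set g : ℕ → ℝ → ℝ≥0∞ := fun i x =>
      (B i).indicator (fun x => if ν ≤ i then ENNReal.ofReal (M.p1 i ν x / M.p0 x) else 1) x
      with hg_def
    have hg : ∀ i, Measurable (g i) := by
      intro i
      apply Measurable.indicator _ (hB i)
      split_ifs
      · exact ENNReal.measurable_ofReal.comp ((M.p1_meas i ν).div M.p0_meas)
      · exact measurable_const
    -- LHS
    have hL : M.P ν (⋂ i ∈ Finset.Icc 1 n, X i ⁻¹' B i)
        = ∏ i ∈ Finset.Icc 1 n, M.P ν (X i ⁻¹' B i) :=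
      (M.P_indep ν).measure_inter_preimage_eq_mul _ (fun i _ => hB i)
    -- RHS as integral of a product
    have hDmeas : MeasurableSet (⋂ i ∈ Finset.Icc 1 n, X i ⁻¹' B i) :=
      Finset.measurableSet_biInter _ (fun i _ => (measurable_X i) (hB i))
    have hptwise : ∀ ω : Obs,
        (⋂ i ∈ Finset.Icc 1 n, X i ⁻¹' B i).indicator (M.den ν n) ω
          = ∏ i ∈ Finset.Icc 1 n, g i (ω i) := by
      intro ω
      by_cases hω : ω ∈ ⋂ i ∈ Finset.Icc 1 n, X i ⁻¹' B i
      · rw [Set.indicator_of_mem hω]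
        have hmem : ∀ i ∈ Finset.Icc 1 n, ω i ∈ B i := by
          intro i hi
          exact Set.mem_iInter₂.mp hω i hi
        have hgval : ∀ i ∈ Finset.Icc 1 n, g i (ω i)
            = if ν ≤ i then ENNReal.ofReal (M.p1 i ν (ω i) / M.p0 (ω i)) else 1 := by
          intro i hi; rw [hg_def]; exact Set.indicator_of_mem (hmem i hi) _
        have hsub : Finset.Icc ν n ⊆ Finset.Icc 1 n :=
          Finset.Icc_subset_Icc hν le_rfl
        calc M.den ν n ω
            = ∏ i ∈ Finset.Icc ν n,
                (if ν ≤ i then ENNReal.ofReal (M.p1 i ν (ω i) / M.p0 (ω i)) else 1) := by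
              apply Finset.prod_congr rfl
              intro i hi
              rw [if_pos (Finset.mem_Icc.mp hi).1]
          _ = ∏ i ∈ Finset.Icc 1 n,
                (if ν ≤ i then ENNReal.ofReal (M.p1 i ν (ω i) / M.p0 (ω i)) else 1) := by
              apply Finset.prod_subset hsub
              intro i hi hni
              rw [Finset.mem_Icc] at hi
              rw [if_neg]
              intro hle
              exact hni (Finset.mem_Icc.mpr ⟨hle, hi.2⟩)
          _ = ∏ i ∈ Finset.Icc 1 n, g i (ω i) := (Finset.prod_congr rfl hgval).symm
      · rw [Set.indicator_of_notMem hω]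
        rw [Set.mem_iInter₂] at hω
        push_neg at hω
        obtain ⟨i, hi, hBi⟩ := hω
        refine (Finset.prod_eq_zero hi ?_).symm
        rw [hg_def]
        exact Set.indicator_of_notMem (by simpa [X] using hBi) _
    -- each factor equals the marginal of `P ν`
    have hfac : ∀ i ∈ Finset.Icc 1 n,
        ∫⁻ ω, g i (ω i) ∂M.Pinf = M.P ν (X i ⁻¹' B i) := by
      intro i hi
      rw [Finset.mem_Icc] at hi
      have hXi : M.Pinf.map (X i) = (volume : Measure ℝ).withDensity
          fun x => ENNReal.ofReal (M.p0 x) := M.Pinf_law i hi.1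
      have step1 : ∫⁻ ω, g i (ω i) ∂M.Pinf = ∫⁻ x, g i x ∂(M.Pinf.map (X i)) :=
        (lintegral_map (hg i) (measurable_X i)).symm
      rw [step1, hXi,
        lintegral_withDensity_eq_lintegral_mul _ M.p0_meas.ennreal_ofReal (hg i)]
      have hrw : ∀ x : ℝ, ((fun x => ENNReal.ofReal (M.p0 x)) * g i) x
          = (B i).indicator (fun x => ENNReal.ofReal (M.p0 x) *
              (if ν ≤ i then ENNReal.ofReal (M.p1 i ν x / M.p0 x) else 1)) x := by
        intro x
        simp only [Pi.mul_apply, hg_def]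
        by_cases hx : x ∈ B i
        · rw [Set.indicator_of_mem hx, Set.indicator_of_mem hx]
        · rw [Set.indicator_of_notMem hx, Set.indicator_of_notMem hx, mul_zero]
      rw [lintegral_congr hrw, lintegral_indicator (hB i)]
      by_cases hνi : ν ≤ i
      · have hpt : ∀ x : ℝ, ENNReal.ofReal (M.p0 x) *
            (if ν ≤ i then ENNReal.ofReal (M.p1 i ν x / M.p0 x) else 1)
            = ENNReal.ofReal (M.p1 i ν x) := by
          intro x
          rw [if_pos hνi, ← ENNReal.ofReal_mul (M.p0_pos x).le, mul_comm,
            div_mul_cancel₀ _ (M.p0_pos x).ne']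
        calc ∫⁻ x in B i, ENNReal.ofReal (M.p0 x) *
              (if ν ≤ i then ENNReal.ofReal (M.p1 i ν x / M.p0 x) else 1) ∂volume
            = ∫⁻ x in B i, ENNReal.ofReal (M.p1 i ν x) ∂volume := by
              apply lintegral_congr; exact fun x => hpt x
          _ = (volume : Measure ℝ).withDensity
                (fun x => ENNReal.ofReal (M.p1 i ν x)) (B i) := by
              rw [withDensity_apply _ (hB i)]
          _ = (M.P ν).map (X i) (B i) := by rw [M.P_law_post ν i hν hνi]
          _ = M.P ν (X i ⁻¹' B i) := Measure.map_apply (measurable_X i) (hB i)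
      · have hpt : ∀ x : ℝ, ENNReal.ofReal (M.p0 x) *
            (if ν ≤ i then ENNReal.ofReal (M.p1 i ν x / M.p0 x) else 1)
            = ENNReal.ofReal (M.p0 x) := by
          intro x; rw [if_neg hνi, mul_one]
        calc ∫⁻ x in B i, ENNReal.ofReal (M.p0 x) *
              (if ν ≤ i then ENNReal.ofReal (M.p1 i ν x / M.p0 x) else 1) ∂volume
            = ∫⁻ x in B i, ENNReal.ofReal (M.p0 x) ∂volume := by
              apply lintegral_congr; exact fun x => hpt x
          _ = (volume : Measure ℝ).withDensity
                (fun x => ENNReal.ofReal (M.p0 x)) (B i) := by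
              rw [withDensity_apply _ (hB i)]
          _ = (M.P ν).map (X i) (B i) := by
              rw [M.P_law_pre ν i hi.1 (lt_of_not_ge hνi)]
          _ = M.P ν (X i ⁻¹' B i) := Measure.map_apply (measurable_X i) (hB i)
    -- put it together
    rw [hL, hQ]
    rw [withDensity_apply _ hDmeas, ← lintegral_indicator hDmeas,
      lintegral_congr hptwise,
      lintegral_prod_coord _ M.Pinf_indep g hg]
    exact (Finset.prod_congr rfl hfac).symm
  -- extend from the π-system to `F n` via trimmed measures
  have hQuniv : Q Set.univ = 1 := by
    rw [← hgen _ (univ_mem_cyl n)]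
    simp
  haveI hQfin : IsFiniteMeasure Q := ⟨by rw [hQuniv]; exact ENNReal.one_lt_top⟩
  have htrim : (M.P ν).trim (F_le n) = Q.trim (F_le n) := by
    refine @ext_of_generate_finite Obs (F n) ((M.P ν).trim (F_le n)) (Q.trim (F_le n))
      (cyl n) (F_eq_generateFrom n) (isPiSystem_cyl n) ?_ ?_ ?_
    · infer_instance
    · intro s hs
      have hsF : MeasurableSet[F n] s := by
        rw [F_eq_generateFrom n]
        exact MeasurableSpace.measurableSet_generateFrom hs
      rw [trim_measurableSet_eq (F_le n) hsF, trim_measurableSet_eq (F_le n) hsF]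
      exact hgen s hs
    · rw [trim_measurableSet_eq (F_le n) MeasurableSet.univ,
        trim_measurableSet_eq (F_le n) MeasurableSet.univ]
      exact hgen _ (univ_mem_cyl n)
  have : M.P ν D = Q D := by
    have h1 := trim_measurableSet_eq (F_le n) hD (μ := M.P ν)
    have h2 := trim_measurableSet_eq (F_le n) hD (μ := Q)
    rw [← h1, ← h2, htrim]
  rw [this, hQ, withDensity_apply _ (F_le n D hD)]


/-- **change-of-measure inequality.** For every stopping time `τ`, change
point `ν ≥ 1`, horizon `h ≥ 1` and `C > 0`,
`P_ν(ν ≤ τ < ν + h) ≤ e^C P_∞(ν ≤ τ < ν + h) + P_ν(max_{0 ≤ n < h} Σ_{i=ν}^{ν+n} Z_{i,ν} ≥ C)`. -/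
theorem change_of_measure_delay_probability_bound
    (M : Model) (τ : Obs → ℕ∞) (hτ : IsStopping τ)
    (ν : ℕ) (hν : 1 ≤ ν) (h : ℕ) (hh : 1 ≤ h) (C : ℝ) (hC : 0 < C) :
    M.P ν {ω | ∃ n : ℕ, τ ω = (n : ℕ∞) ∧ ν ≤ n ∧ n < ν + h}
      ≤ ENNReal.ofReal (Real.exp C)
          * M.Pinf {ω | ∃ n : ℕ, τ ω = (n : ℕ∞) ∧ ν ≤ n ∧ n < ν + h}
        + M.P ν {ω | ∃ n : ℕ, n < h ∧ C ≤ ∑ i ∈ Finset.range (n + 1), M.Z (ν + i) ν ω} := by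
  classical
  set A : Set Obs := {ω | ∃ n : ℕ, τ ω = (n : ℕ∞) ∧ ν ≤ n ∧ n < ν + h} with hA
  set Bset : Set Obs :=
    {ω | ∃ n : ℕ, n < h ∧ C ≤ ∑ i ∈ Finset.range (n + 1), M.Z (ν + i) ν ω} with hBdef
  set T : ℕ → Set Obs := fun n => {ω | τ ω = (n : ℕ∞)} with hTdef
  set E : ℕ → Set Obs :=
    fun n => {ω | ∑ i ∈ Finset.range (n - ν + 1), M.Z (ν + i) ν ω < C} with hEdef
  have hT_F : ∀ n : ℕ, 1 ≤ n → MeasurableSet[F n] (T n) := by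
    intro n hn1
    have h2 : MeasurableSet[F n] {ω | τ ω ≤ ((n - 1 : ℕ) : ℕ∞)} :=
      F_mono (Nat.sub_le n 1) _ (hτ (n - 1))
    have heq : T n = {ω | τ ω ≤ (n : ℕ∞)} ∩ {ω | τ ω ≤ ((n - 1 : ℕ) : ℕ∞)}ᶜ := by
      ext ω
      simp only [hTdef, Set.mem_inter_iff, Set.mem_compl_iff, Set.mem_setOf_eq]
      constructor
      · intro hτω
        rw [hτω]
        refine ⟨le_rfl, ?_⟩
        rw [Nat.cast_le]
        omega
      · rintro ⟨hle, hgt⟩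
        have hne : τ ω ≠ ⊤ := by
          intro htop
          rw [htop] at hle
          simp at hle
        obtain ⟨k, hk⟩ := WithTop.ne_top_iff_exists.mp hne
        rw [ENat.some_eq_coe] at hk
        rw [← hk] at hle hgt ⊢
        have h1 : k ≤ n := ENat.coe_le_coe.mp hle
        have h2 : ¬ k ≤ n - 1 := fun hkle => hgt (ENat.coe_le_coe.mpr hkle)
        have hkn : k = n := by omega
        rw [hkn]; rfl
    rw [heq]
    exact (hτ n).inter h2.compl
  have hE_F : ∀ n : ℕ, ν ≤ n → MeasurableSet[F n] (E n) := by
    intro n hn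
    have hsum : Measurable[F n]
        (fun ω => ∑ i ∈ Finset.range (n - ν + 1), M.Z (ν + i) ν ω) := by
      apply Finset.measurable_sum
      intro i hi
      rw [Finset.mem_range] at hi
      have hcoord : Measurable[F n] (X (ν + i)) :=
        measurable_F_X (by omega) (by omega)
      exact (Real.measurable_log.comp
        ((M.p1_meas (ν + i) ν).div M.p0_meas)).comp hcoord
    exact measurableSet_lt hsum measurable_const
  have hTE_F : ∀ n : ℕ, ν ≤ n → MeasurableSet[F n] (T n ∩ E n) :=
    fun n hn => (hT_F n (hν.trans hn)).inter (hE_F n hn)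
  have hsub : A ⊆ (⋃ n ∈ Finset.Ico ν (ν + h), (T n ∩ E n)) ∪ Bset := by
    intro ω hω
    obtain ⟨n, hτn, hνn, hnh⟩ := hω
    by_cases hBm : ω ∈ Bset
    · exact Set.mem_union_right _ hBm
    · left
      rw [Set.mem_iUnion₂]
      refine ⟨n, Finset.mem_Ico.mpr ⟨hνn, hnh⟩, hτn, ?_⟩
      by_contra hnot
      rw [hEdef] at hnot
      simp only [Set.mem_setOf_eq, not_lt] at hnot
      exact hBm ⟨n - ν, by omega, hnot⟩
  have hbound : ∀ n ∈ Finset.Ico ν (ν + h),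
      M.P ν (T n ∩ E n) ≤ ENNReal.ofReal (Real.exp C) * M.Pinf (T n) := by
    intro n hn
    obtain ⟨hνn, hlt⟩ := Finset.mem_Ico.mp hn
    have hkey := M.key hν hνn (hTE_F n hνn)
    have hle : ∀ ω ∈ T n ∩ E n, M.den ν n ω ≤ ENNReal.ofReal (Real.exp C) := by
      rintro ω ⟨-, hωE⟩
      have hr : ∀ i ∈ Finset.Icc ν n, 0 ≤ M.p1 i ν (ω i) / M.p0 (ω i) :=
        fun i _ => div_nonneg (M.p1_nonneg _ _ _) (M.p0_pos _).le
      have h1 : M.den ν n ω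
          = ENNReal.ofReal (∏ i ∈ Finset.Icc ν n, (M.p1 i ν (ω i) / M.p0 (ω i))) :=
        (ENNReal.ofReal_prod_of_nonneg hr).symm
      rw [h1]
      apply ENNReal.ofReal_le_ofReal
      have hsC : ∑ i ∈ Finset.range (n - ν + 1), M.Z (ν + i) ν ω < C := hωE
      have hreindex : ∑ i ∈ Finset.Icc ν n,
            Real.log (M.p1 i ν (ω i) / M.p0 (ω i))
          = ∑ i ∈ Finset.range (n - ν + 1), M.Z (ν + i) ν ω := by
        rw [← Finset.Ico_add_one_right_eq_Icc, Finset.sum_Ico_eq_sum_range]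
        have hcount : n + 1 - ν = n - ν + 1 := by omega
        rw [hcount]
        rfl
      calc ∏ i ∈ Finset.Icc ν n, (M.p1 i ν (ω i) / M.p0 (ω i))
          ≤ ∏ i ∈ Finset.Icc ν n, Real.exp (Real.log (M.p1 i ν (ω i) / M.p0 (ω i))) :=
            Finset.prod_le_prod hr (fun i _ => Real.le_exp_log _)
        _ = Real.exp (∑ i ∈ Finset.Icc ν n, Real.log (M.p1 i ν (ω i) / M.p0 (ω i))) :=
            (Real.exp_sum _ _).symm
        _ ≤ Real.exp C := by
            apply Real.exp_le_exp.mpr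
            rw [hreindex]
            exact hsC.le
    calc M.P ν (T n ∩ E n) = ∫⁻ ω in T n ∩ E n, M.den ν n ω ∂M.Pinf := hkey
      _ ≤ ∫⁻ _ω in T n ∩ E n, ENNReal.ofReal (Real.exp C) ∂M.Pinf :=
          setLIntegral_mono' (F_le n _ (hTE_F n hνn)) hle
      _ = ENNReal.ofReal (Real.exp C) * M.Pinf (T n ∩ E n) := setLIntegral_const _ _
      _ ≤ ENNReal.ofReal (Real.exp C) * M.Pinf (T n) :=
          mul_le_mul_right (measure_mono Set.inter_subset_left) _
  have hAeq : A = ⋃ n ∈ Finset.Ico ν (ν + h), T n := by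
    ext ω
    simp only [hA, hTdef, Set.mem_setOf_eq, Set.mem_iUnion, Finset.mem_Ico, exists_prop]
    constructor
    · rintro ⟨n, h1, h2, h3⟩; exact ⟨n, ⟨h2, h3⟩, h1⟩
    · rintro ⟨n, ⟨h2, h3⟩, h1⟩; exact ⟨n, h1, h2, h3⟩
  have hdisj : (↑(Finset.Ico ν (ν + h)) : Set ℕ).PairwiseDisjoint T := by
    intro m _ n _ hmn
    rw [Function.onFun, Set.disjoint_left]
    intro ω h1 h2
    apply hmn
    have : (m : ℕ∞) = (n : ℕ∞) := by
      rw [← h1, ← h2]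
    exact_mod_cast this
  have hPinfA : ∑ n ∈ Finset.Ico ν (ν + h), M.Pinf (T n) = M.Pinf A := by
    rw [hAeq]
    exact (measure_biUnion_finset hdisj
      (fun n hn => F_le n _ (hT_F n (hν.trans (Finset.mem_Ico.mp hn).1)))).symm
  have hstep1 : M.P ν A ≤ (∑ n ∈ Finset.Ico ν (ν + h), M.P ν (T n ∩ E n)) + M.P ν Bset := by
    refine le_trans (measure_mono hsub) ?_
    refine le_trans (measure_union_le _ _) ?_
    exact add_le_add_left (measure_biUnion_finset_le _ _) _
  have hstep2 : ∑ n ∈ Finset.Ico ν (ν + h), M.P ν (T n ∩ E n)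
      ≤ ENNReal.ofReal (Real.exp C) * M.Pinf A := by
    calc ∑ n ∈ Finset.Ico ν (ν + h), M.P ν (T n ∩ E n)
        ≤ ∑ n ∈ Finset.Ico ν (ν + h), ENNReal.ofReal (Real.exp C) * M.Pinf (T n) :=
          Finset.sum_le_sum hbound
      _ = ENNReal.ofReal (Real.exp C) * ∑ n ∈ Finset.Ico ν (ν + h), M.Pinf (T n) := by
          rw [Finset.mul_sum]
      _ = ENNReal.ofReal (Real.exp C) * M.Pinf A := by rw [hPinfA]
  exact le_trans hstep1 (add_le_add_left hstep2 _)


end QCD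
end
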